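/- Let q be a complex number with q^2 a primitive N-th root of unity and q^N = (-1)^{N+1}, and let y1, y2, y3 be nonzero complex numbers. Define endomorphisms X1, X2, X3 of C^N (with basis e_0,...,e_{N-1}, indices mod N) by X1(e_i) = y1 q^{2i} e_i, X2(e_i) = y2 e_{i+1}, X3(e_i) = y3 q^{1-2i} e_{i-1}. Then X1X2 = q^2 X2X1, X2X3 = q^2 X3X2, and X3X1 = q^2 X1X3. -/

import Mathlib

/-- `X1 e_i = y1 q^{2i} e_i`. -/
noncomputable def triX1 (N : ℕ) (q y1 : ℂ) : Matrix (Fin N) (Fin N) ℂ :=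
  Matrix.diagonal fun i => y1 * q ^ (2 * (i : ℕ))

/-- `X2 e_i = y2 e_{i+1}` (indices mod `N`). -/
noncomputable def triX2 (N : ℕ) [NeZero N] (y2 : ℂ) : Matrix (Fin N) (Fin N) ℂ :=
  Matrix.of fun j i => if j = i + 1 then y2 else 0

/-- `X3 e_i = y3 q^{1-2i} e_{i-1}` (indices mod `N`). -/
noncomputable def triX3 (N : ℕ) [NeZero N] (q y3 : ℂ) : Matrix (Fin N) (Fin N) ℂ :=
  Matrix.of fun j i => if j = i - 1 then y3 * q ^ ((1 : ℤ) - 2 * ((i : ℕ) : ℤ)) else 0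

/-- The standard operators satisfy the triangle-algebra commutation relations. -/
theorem triangle_standard_relations (N : ℕ) [NeZero N] (q : ℂ)
    (hq : IsPrimitiveRoot (q ^ 2) N) (hqN : q ^ N = (-1 : ℂ) ^ (N + 1))
    (y1 y2 y3 : ℂ) (hy1 : y1 ≠ 0) (hy2 : y2 ≠ 0) (hy3 : y3 ≠ 0) :
    triX1 N q y1 * triX2 N y2 = (q ^ 2) • (triX2 N y2 * triX1 N q y1) ∧
    triX2 N y2 * triX3 N q y3 = (q ^ 2) • (triX3 N q y3 * triX2 N y2) ∧
    triX3 N q y3 * triX1 N q y1 = (q ^ 2) • (triX1 N q y1 * triX3 N q y3) := by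
  have h1 : (q ^ 2) ^ N = 1 := hq.pow_eq_one
  have hq0 : q ≠ 0 := by
    intro h; rw [h] at h1; simp [zero_pow, NeZero.ne N] at h1
  have h2N : q ^ (2 * N) = 1 := by rw [pow_mul]; exact h1
  obtain ⟨n, rfl⟩ : ∃ n, N = n + 1 := ⟨N - 1, by have := NeZero.pos N; omega⟩
  have L1 : ∀ i : Fin (n+1), q ^ (2 * ((i + 1 : Fin (n+1)) : ℕ)) = q ^ 2 * q ^ (2 * (i : ℕ)) := by
    intro i
    rw [Fin.val_add_one]
    split
    · next h =>
      subst h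
      rw [← pow_add]
      simp only [mul_zero, pow_zero, Fin.val_last]
      rw [show 2 + 2 * n = 2 * (n + 1) by ring, h2N]
    · rw [← pow_add]; ring_nf
  have L3 : ∀ i : Fin (n+1), q ^ 2 * q ^ (2 * ((i - 1 : Fin (n+1)) : ℕ)) = q ^ (2 * (i : ℕ)) := by
    intro i
    rw [Fin.coe_sub_one]
    split
    · next h =>
      subst h
      rw [← pow_add]
      simp only [Fin.val_zero, mul_zero, pow_zero]
      rw [show 2 + 2 * n = 2 * (n + 1) by ring, h2N]
    · next h =>
      rw [← pow_add]
      congr 1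
      have : 1 ≤ (i : ℕ) := Fin.pos_iff_ne_zero.mpr h
      omega
  have hzp : ∀ m : ℕ, q ^ ((1 : ℤ) - 2 * (m : ℤ)) = q * (q ^ (2 * m))⁻¹ := by
    intro m
    rw [zpow_sub₀ hq0, zpow_one, show (2 * (m : ℤ)) = ((2 * m : ℕ) : ℤ) by push_cast; ring,
      zpow_natCast, div_eq_mul_inv]
  have L2 : ∀ i : Fin (n+1),
      q ^ 2 * q ^ ((1 : ℤ) - 2 * (((i + 1 : Fin (n+1)) : ℕ) : ℤ)) = q ^ ((1 : ℤ) - 2 * ((i : ℕ) : ℤ)) := by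
    intro i
    rw [hzp, hzp, L1, mul_inv]
    have h2 : (q : ℂ) ^ 2 ≠ 0 := pow_ne_zero _ hq0
    have h2i : (q : ℂ) ^ (2 * (i : ℕ)) ≠ 0 := pow_ne_zero _ hq0
    field_simp
  refine ⟨?_, ?_, ?_⟩
  · ext j i
    simp only [triX1, triX2, Matrix.diagonal_mul, Matrix.mul_diagonal, Matrix.smul_apply,
      Matrix.of_apply, smul_eq_mul, mul_ite, ite_mul, mul_zero, zero_mul]
    split
    · next h => subst h; rw [L1]; ring
    · rfl
  · ext j i
    simp only [triX2, triX3, Matrix.mul_apply, Matrix.smul_apply, Matrix.of_apply, smul_eq_mul,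
      mul_ite, ite_mul, mul_zero, zero_mul, Finset.sum_ite_eq, Finset.sum_ite_eq',
      Finset.mem_univ, if_true, sub_add_cancel, add_sub_cancel_right]
    split
    · next h => subst h; rw [← L2]; ring
    · simp
  · ext j i
    simp only [triX1, triX3, Matrix.diagonal_mul, Matrix.mul_diagonal, Matrix.smul_apply,
      Matrix.of_apply, smul_eq_mul, mul_ite, ite_mul, mul_zero, zero_mul]
    split
    · next h => subst h; rw [← L3 i]; ring
    · simp
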